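/- Any compact subgroup K of a connected nilpotent Lie group N is contained in the center of N. -/

import Mathlib

open Set Filter Topology Metric Pointwise Manifold

section Topo

variable {G : Type*} [Group G] [TopologicalSpace G] [IsTopologicalGroup G]

private lemma isPreconnected_set_mul {s t : Set G} (hs : IsPreconnected s)
    (ht : IsPreconnected t) : IsPreconnected (s * t) := by
  rw [← Set.image_mul_prod]
  exact (hs.prod ht).image _ (continuous_mul.continuousOn)

private lemma isPreconnected_set_inv {s : Set G} (hs : IsPreconnected s) :
    IsPreconnected (s⁻¹ : Set G) := by
  have : (s⁻¹ : Set G) = Inv.inv '' s := by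
    ext x; simp [Set.mem_inv, Set.mem_image]
  rw [this]
  exact hs.image _ continuous_inv.continuousOn

/-- The subgroup generated by a preconnected set containing `1` is preconnected. -/
private lemma isPreconnected_coe_closure {S : Set G} (h1 : (1 : G) ∈ S)
    (hS : IsPreconnected S) :
    IsPreconnected ((Subgroup.closure S : Subgroup G) : Set G) := by
  set S' : Set G := S ∪ S⁻¹ with hS'def
  have h1' : (1 : G) ∈ S' := Or.inl h1
  have h1inv : (1 : G) ∈ (S⁻¹ : Set G) := by simpa [Set.mem_inv] using h1
  have hS' : IsPreconnected S' := hS.union 1 h1 h1inv (isPreconnected_set_inv hS)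
  have hsymm : ∀ x ∈ S', x⁻¹ ∈ S' := by
    rintro x (hx | hx)
    · exact Or.inr (by simpa [Set.mem_inv] using hx)
    · left; simpa [Set.mem_inv] using hx
  have hpow : ∀ n : ℕ, IsPreconnected (S' ^ n) := by
    intro n
    induction n with
    | zero =>
      have : (S' ^ 0 : Set G) = {1} := by rw [pow_zero]; rfl
      rw [this]; exact isPreconnected_singleton
    | succ n ih =>
      rw [pow_succ]
      exact isPreconnected_set_mul ih hS'
  have hmem1 : ∀ n : ℕ, (1 : G) ∈ S' ^ n := fun n => Set.one_mem_pow h1'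
  have hpowinv : ∀ n : ℕ, ∀ x ∈ S' ^ n, x⁻¹ ∈ S' ^ n := by
    intro n
    induction n with
    | zero =>
      intro x hx
      rw [pow_zero, Set.mem_one] at hx
      subst hx
      simp [pow_zero, Set.mem_one]
    | succ n ih =>
      intro x hx
      rw [pow_succ] at hx
      obtain ⟨y, hy, z, hz, rfl⟩ := Set.mem_mul.mp hx
      rw [pow_succ']
      exact Set.mem_mul.mpr ⟨z⁻¹, hsymm z hz, y⁻¹, ih y hy, by simp [mul_inv_rev]⟩
  have key : ((Subgroup.closure S : Subgroup G) : Set G) = ⋃ n : ℕ, S' ^ n := by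
    apply Set.Subset.antisymm
    · intro x hx
      refine Subgroup.closure_induction (k := S)
        (p := fun g _ => g ∈ ⋃ n : ℕ, S' ^ n) ?_ ?_ ?_ ?_ hx
      · intro y hy
        exact Set.mem_iUnion.mpr ⟨1, by rw [pow_one]; exact Or.inl hy⟩
      · exact Set.mem_iUnion.mpr ⟨0, by simp [pow_zero]⟩
      · rintro y z _ _ hy hz
        obtain ⟨m, hm⟩ := Set.mem_iUnion.mp hy
        obtain ⟨n, hn⟩ := Set.mem_iUnion.mp hz
        exact Set.mem_iUnion.mpr ⟨m + n, by rw [pow_add]; exact Set.mul_mem_mul hm hn⟩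
      · rintro y _ hy
        obtain ⟨m, hm⟩ := Set.mem_iUnion.mp hy
        exact Set.mem_iUnion.mpr ⟨m, hpowinv m y hm⟩
    · refine Set.iUnion_subset fun n => ?_
      induction n with
      | zero =>
        rw [pow_zero]
        intro x hx
        rw [Set.mem_one] at hx
        simp [hx, Subgroup.one_mem]
      | succ n ih =>
        rw [pow_succ]
        rintro x hx
        obtain ⟨y, hy, z, hz, rfl⟩ := Set.mem_mul.mp hx
        have hz' : z ∈ Subgroup.closure S := by
          rcases hz with hz | hz
          · exact Subgroup.subset_closure hz
          · exact (Subgroup.closure S).inv_mem_iff.mp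
              (Subgroup.subset_closure (by simpa [Set.mem_inv] using hz))
        exact Subgroup.mul_mem _ (ih hy) hz'
  rw [key]
  exact isPreconnected_iUnion ⟨1, Set.mem_iInter.mpr hmem1⟩ hpow

/-- A preconnected subgroup is generated by its intersection with any neighbourhood of `1`. -/
private lemma le_closure_inter_nhds {H : Subgroup G} (hH : IsPreconnected (H : Set G))
    {V : Set G} (hV : V ∈ 𝓝 (1 : G)) :
    H ≤ Subgroup.closure ((H : Set G) ∩ V) := by
  obtain ⟨W, hWV, hWo, hW1⟩ := mem_nhds_iff.mp hV
  set V₀ : Set G := W ∩ W⁻¹ with hV₀def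
  have hV₀o : IsOpen V₀ := hWo.inter hWo.inv
  have hV₀1 : (1 : G) ∈ V₀ := ⟨hW1, by simpa [Set.mem_inv] using hW1⟩
  have hV₀V : V₀ ⊆ V := fun x hx => hWV hx.1
  set L : Subgroup G := Subgroup.closure ((H : Set G) ∩ V) with hLdef
  have hLH : L ≤ H := (Subgroup.closure_le H).mpr Set.inter_subset_left
  by_contra hcon
  obtain ⟨m, hmH, hmL⟩ : ∃ m, m ∈ H ∧ m ∉ L := by
    by_contra h
    push_neg at h
    exact hcon fun x hx => h x hx
  have habs : ∀ x ∈ H, x ∈ ((L : Set G) * V₀) → x ∈ L := by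
    intro x hxH hx
    obtain ⟨l, hl, v, hv, rfl⟩ := Set.mem_mul.mp hx
    have h1 : l⁻¹ * (l * v) ∈ (H : Set G) ∩ V := by
      refine ⟨?_, by simpa using hV₀V hv⟩
      exact Subgroup.mul_mem _ (Subgroup.inv_mem _ (hLH hl)) hxH
    have : l⁻¹ * (l * v) ∈ L := Subgroup.subset_closure h1
    simpa using Subgroup.mul_mem _ hl this
  have hdisj : ∀ x ∈ H, x ∈ ((L : Set G) * V₀) → x ∈ (((H : Set G) \ (L : Set G)) * V₀) → False := by
    intro x hxH hx1 hx2
    obtain ⟨n, hn, w, hw, rfl⟩ := Set.mem_mul.mp hx2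
    have hxL : n * w ∈ L := habs _ hxH hx1
    have h1 : n⁻¹ * (n * w) ∈ (H : Set G) ∩ V := by
      refine ⟨?_, by simpa using hV₀V hw⟩
      exact Subgroup.mul_mem _ (Subgroup.inv_mem _ hn.1) hxH
    have h2 : n⁻¹ * (n * w) ∈ L := Subgroup.subset_closure h1
    have : n ∈ L := by
      have := Subgroup.mul_mem _ hxL (Subgroup.inv_mem _ h2)
      simpa [mul_assoc] using this
    exact hn.2 this
  have hcover : (H : Set G) ⊆ ((L : Set G) * V₀) ∪ (((H : Set G) \ (L : Set G)) * V₀) := by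
    intro x hx
    by_cases hxL : x ∈ L
    · exact Or.inl (Set.mem_mul.mpr ⟨x, hxL, 1, hV₀1, mul_one x⟩)
    · exact Or.inr (Set.mem_mul.mpr ⟨x, ⟨hx, hxL⟩, 1, hV₀1, mul_one x⟩)
  have hne1 : ((H : Set G) ∩ ((L : Set G) * V₀)).Nonempty :=
    ⟨1, Subgroup.one_mem H, Set.mem_mul.mpr ⟨1, Subgroup.one_mem L, 1, hV₀1, mul_one 1⟩⟩
  have hne2 : ((H : Set G) ∩ (((H : Set G) \ (L : Set G)) * V₀)).Nonempty :=
    ⟨m, hmH, Set.mem_mul.mpr ⟨m, ⟨hmH, hmL⟩, 1, hV₀1, mul_one m⟩⟩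
  obtain ⟨x, hxH, hx1, hx2⟩ := hH _ _ (hV₀o.mul_left) (hV₀o.mul_left) hcover hne1 hne2
  exact hdisj x hxH hx1 hx2

private lemma isPreconnected_lcs [ConnectedSpace G] (n : ℕ) :
    IsPreconnected ((Subgroup.lowerCentralSeries (⊤ : Subgroup G) n : Subgroup G) : Set G) := by
  induction n with
  | zero =>
    have : ((Subgroup.lowerCentralSeries (⊤ : Subgroup G) 0 : Subgroup G) : Set G) = Set.univ := by
      simp [Subgroup.lowerCentralSeries_zero]
    rw [this]; exact isPreconnected_univ
  | succ n ih =>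
    rw [Subgroup.lowerCentralSeries_succ, Subgroup.commutator_def]
    apply isPreconnected_coe_closure
    · exact ⟨1, Subgroup.one_mem _, 1, trivial, by group⟩
    · have heq : { x : G | ∃ p ∈ Subgroup.lowerCentralSeries (⊤ : Subgroup G) n, ∃ q ∈ (⊤ : Subgroup G),
          p * q * p⁻¹ * q⁻¹ = x } =
          (fun p : G × G => p.1 * p.2 * p.1⁻¹ * p.2⁻¹) ''
            (((Subgroup.lowerCentralSeries (⊤ : Subgroup G) n : Subgroup G) : Set G) ×ˢ (Set.univ : Set G)) := by
        ext x
        simp only [Set.mem_setOf_eq, Set.mem_image, Set.mem_prod, Set.mem_univ, and_true,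
          SetLike.mem_coe]
        constructor
        · rintro ⟨p, hp, q, -, rfl⟩
          exact ⟨(p, q), hp, rfl⟩
        · rintro ⟨⟨p, q⟩, hp, rfl⟩
          exact ⟨p, hp, q, trivial, rfl⟩
      simp only [commutatorElement_def]; rw [heq]
      refine (ih.prod isPreconnected_univ).image _ ?_
      exact (Continuous.mul (by continuity) (by continuity)).continuousOn

private lemma exists_small_commutator {K : Set G} (hK : IsCompact K) {U : Set G}
    (hU : U ∈ 𝓝 (1 : G)) :
    ∃ V ∈ 𝓝 (1 : G), ∀ x ∈ V, ∀ k ∈ K, x * k * x⁻¹ * k⁻¹ ∈ U := by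
  have hcont : Continuous fun p : G × G => p.1 * p.2 * p.1⁻¹ * p.2⁻¹ := by continuity
  have hpt : ∀ k : G, ∃ u v : Set G, IsOpen u ∧ (1 : G) ∈ u ∧ IsOpen v ∧ k ∈ v ∧
      ∀ x ∈ u, ∀ y ∈ v, x * y * x⁻¹ * y⁻¹ ∈ U := by
    intro k
    have h1 : (fun p : G × G => p.1 * p.2 * p.1⁻¹ * p.2⁻¹) (1, k) = 1 := by simp
    have hU' : U ∈ 𝓝 ((1 : G) * k * (1:G)⁻¹ * k⁻¹) := by simpa using hU
    have : (fun p : G × G => p.1 * p.2 * p.1⁻¹ * p.2⁻¹) ⁻¹' U ∈ 𝓝 ((1 : G), k) :=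
      hcont.continuousAt.preimage_mem_nhds hU'
    obtain ⟨u, v, huo, h1u, hvo, hkv, huv⟩ := mem_nhds_prod_iff'.mp this
    exact ⟨u, v, huo, h1u, hvo, hkv, fun x hx y hy => huv (Set.mk_mem_prod hx hy)⟩
  choose u v hu h1u hv hkv hcomm using hpt
  obtain ⟨t, _, ht⟩ := hK.elim_nhds_subcover v (fun k _ => (hv k).mem_nhds (hkv k))
  refine ⟨⋂ k ∈ t, u k, ?_, ?_⟩
  · exact (Filter.biInter_finset_mem t).mpr fun k _ => (hu k).mem_nhds (h1u k)
  · intro x hx k hk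
    obtain ⟨k₀, hk₀t, hkv₀⟩ := Set.mem_iUnion₂.mp (ht hk)
    exact hcomm k₀ x (Set.mem_iInter₂.mp hx k₀ hk₀t) k hkv₀

end Topo

theorem central_of_nss {G : Type*} [Group G] [TopologicalSpace G] [IsTopologicalGroup G]
    [ConnectedSpace G] [Group.IsNilpotent G]
    {U₀ : Set G} (hU₀ : U₀ ∈ 𝓝 (1 : G))
    (hNSS : ∀ H : Subgroup G, (H : Set G) ⊆ U₀ → H = ⊥)
    (K : Subgroup G) (hK : IsCompact (K : Set G)) : K ≤ Subgroup.center G := by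
  obtain ⟨n, hn⟩ := nilpotent_iff_lowerCentralSeries.mp ‹Group.IsNilpotent G›
  obtain ⟨V, hV, hsmall⟩ := exists_small_commutator hK hU₀
  set D := Subgroup.centralizer (K : Set G) with hD
  have step : ∀ j : ℕ, Subgroup.lowerCentralSeries (⊤ : Subgroup G) (j + 1) ≤ D → Subgroup.lowerCentralSeries (⊤ : Subgroup G) j ≤ D := by
    intro j IH
    have hgen : ((Subgroup.lowerCentralSeries (⊤ : Subgroup G) j : Subgroup G) : Set G) ∩ V ⊆ (D : Set G) := by
      rintro x ⟨hxγ, hxV⟩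
      have hcen : ∀ k' k : K, (k : G) * (x * k' * x⁻¹ * (k' : G)⁻¹)
          = (x * k' * x⁻¹ * (k' : G)⁻¹) * k := by
        intro k' k
        have hmem : x * k' * x⁻¹ * (k' : G)⁻¹ ∈ Subgroup.lowerCentralSeries (⊤ : Subgroup G) (j + 1) := by
          rw [Subgroup.lowerCentralSeries_succ, Subgroup.commutator_def]
          exact Subgroup.subset_closure ⟨x, hxγ, (k' : G), trivial, rfl⟩
        exact Subgroup.mem_centralizer_iff.mp (IH hmem) (k : G) k.2
      let f : K →* G :=
        { toFun := fun k => x * k * x⁻¹ * (k : G)⁻¹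
          map_one' := by simp
          map_mul' := by
            intro k k'
            have hc : Commute ((k : G)) (x * k' * x⁻¹ * (k' : G)⁻¹) := hcen k' k
            have hcinv : ((k : G))⁻¹ * (x * k' * x⁻¹ * (k' : G)⁻¹)
                = (x * k' * x⁻¹ * (k' : G)⁻¹) * ((k : G))⁻¹ := hc.inv_left.eq
            show x * ↑(k * k') * x⁻¹ * (↑(k * k') : G)⁻¹ =
                (x * k * x⁻¹ * (k : G)⁻¹) * (x * k' * x⁻¹ * (k' : G)⁻¹)
            have hre : (x * k * x⁻¹ * (k : G)⁻¹) * (x * k' * x⁻¹ * (k' : G)⁻¹)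
                = x * k * x⁻¹ * (((k : G))⁻¹ * (x * k' * x⁻¹ * (k' : G)⁻¹)) := by group
            rw [hre, hcinv, Subgroup.coe_mul]
            group }
      have hrange : ((f.range : Subgroup G) : Set G) ⊆ U₀ := by
        rintro y ⟨k, rfl⟩
        exact hsmall x hxV (k : G) k.2
      have hbot := hNSS f.range hrange
      have hfk : ∀ k : K, x * k * x⁻¹ * (k : G)⁻¹ = 1 := by
        intro k
        have hmem : f k ∈ f.range := ⟨k, rfl⟩
        rw [hbot, Subgroup.mem_bot] at hmem
        simpa [f] using hmem
      show x ∈ D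
      rw [hD, Subgroup.mem_centralizer_iff]
      intro h hh
      have h1 : x * h * x⁻¹ * h⁻¹ = 1 := hfk ⟨h, hh⟩
      have h2 : x * h * x⁻¹ = h := by
        have := mul_inv_eq_one.mp h1
        exact this
      have h3 : x * h = h * x := by
        calc x * h = (x * h * x⁻¹) * x := by group
        _ = h * x := by rw [h2]
      exact h3.symm
    intro y hy
    have hle : Subgroup.lowerCentralSeries (⊤ : Subgroup G) j ≤
        Subgroup.closure (((Subgroup.lowerCentralSeries (⊤ : Subgroup G) j : Subgroup G) : Set G) ∩ V) :=
      le_closure_inter_nhds (isPreconnected_lcs j) hV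
    exact (Subgroup.closure_le D).mpr hgen (hle hy)
  have key : ∀ d : ℕ, Subgroup.lowerCentralSeries (⊤ : Subgroup G) (n - d) ≤ D := by
    intro d
    induction d with
    | zero => rw [Nat.sub_zero, hn]; exact bot_le
    | succ d IHd =>
      rcases le_or_gt n d with h | h
      · have : n - (d + 1) = n - d := by omega
        rw [this]; exact IHd
      · have hj : n - d = (n - (d + 1)) + 1 := by omega
        exact step _ (by rw [← hj]; exact IHd)
  have htop : (⊤ : Subgroup G) ≤ D := by
    have := key n
    rwa [Nat.sub_self, Subgroup.lowerCentralSeries_zero] at this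
  intro k hk
  rw [Subgroup.mem_center_iff]
  intro g
  exact (Subgroup.mem_centralizer_iff.mp (htop (Subgroup.mem_top g)) k hk).symm

section NSS

theorem lieGroup_no_small_subgroups {E : Type*} [NormedAddCommGroup E] [NormedSpace ℝ E]
    {G : Type*} [TopologicalSpace G] [ChartedSpace E G] [Group G]
    [LieGroup (modelWithCornersSelf ℝ E) (⊤ : ℕ∞) G] :
    ∃ U ∈ 𝓝 (1 : G), ∀ H : Subgroup G, (H : Set G) ⊆ U → H = ⊥ := by
  classical
  set ψ : PartialEquiv G E := extChartAt 𝓘(ℝ, E) (1 : G) with hψdef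
  set a : E := ψ 1 with hadef
  have h1source : (1 : G) ∈ ψ.source := mem_extChartAt_source (I := 𝓘(ℝ, E)) 1
  have hsa : ψ.symm a = 1 := ψ.left_inv h1source
  have hatarget : a ∈ ψ.target := ψ.map_source h1source
  have htargetopen : IsOpen ψ.target := isOpen_extChartAt_target (1 : G)
  set F : E × E → E := fun p => ψ (ψ.symm p.1 * ψ.symm p.2) with hFdef
  -- `F` is `C¹` near `(a, a)`
  have hsm : ContMDiffAt (𝓘(ℝ, E).prod 𝓘(ℝ, E)) 𝓘(ℝ, E) ((⊤ : ℕ∞) : WithTop ℕ∞)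
      (fun p : G × G => p.1 * p.2) ((1 : G), (1 : G)) :=
    (contMDiff_mul 𝓘(ℝ, E) _).contMDiffAt
  have hF1 : ContDiffAt ℝ 1 F (a, a) := by
    have h2 := (contMDiffAt_iff.mp hsm).2
    rw [ModelWithCorners.range_eq_univ, contDiffWithinAt_univ] at h2
    have heq : (extChartAt 𝓘(ℝ, E) ((1 : G) * 1) ∘ (fun p : G × G => p.1 * p.2) ∘
        (extChartAt (𝓘(ℝ, E).prod 𝓘(ℝ, E)) ((1 : G), (1 : G))).symm) = F := by
      funext p
      simp only [Function.comp_apply, extChartAt_prod, PartialEquiv.prod_symm,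
        PartialEquiv.prod_coe_symm, PartialEquiv.prod_coe, mul_one, hFdef, hψdef]
    have hpt : (extChartAt (𝓘(ℝ, E).prod 𝓘(ℝ, E)) ((1 : G), (1 : G))) ((1 : G), (1 : G))
        = (a, a) := by
      simp only [extChartAt_prod, PartialEquiv.prod_coe, hadef, hψdef]
    rw [heq, hpt] at h2
    exact h2.of_le (by exact_mod_cast le_top)
  obtain ⟨Ω₀, hΩ₀o, hmemΩ₀, hFΩ'⟩ := hF1.contDiffOn' le_rfl (by simp)
  have hFΩ : ContDiffOn ℝ 1 F Ω₀ := by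
    rw [Set.insert_eq_of_mem (Set.mem_univ _), Set.univ_inter] at hFΩ'
    exact hFΩ'
  have hdiffΩ : DifferentiableOn ℝ F Ω₀ := hFΩ.differentiableOn one_ne_zero
  have hfc : ContinuousOn (fderiv ℝ F) Ω₀ := hFΩ.continuousOn_fderiv_of_isOpen hΩ₀o le_rfl
  set inr2 : E →L[ℝ] E × E := ContinuousLinearMap.inr ℝ E E with hinr2
  set D2 : E × E → (E →L[ℝ] E) := fun p => (fderiv ℝ F p).comp inr2 with hD2
  have hD2c : ContinuousOn D2 Ω₀ := hfc.clm_comp continuousOn_const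
  have hpart : ∀ p : E × E, p ∈ Ω₀ → HasFDerivAt (fun y => F (p.1, y)) (D2 p) p.2 := by
    intro p hp
    have h1 : HasFDerivAt F (fderiv ℝ F p) p :=
      (hdiffΩ.differentiableAt (hΩ₀o.mem_nhds hp)).hasFDerivAt
    have h2 : HasFDerivAt (fun y : E => ((p.1, y) : E × E)) inr2 p.2 :=
      HasFDerivAt.prodMk (hasFDerivAt_const p.1 p.2) (hasFDerivAt_id p.2)
    exact h1.comp p.2 h2
  have hD2aa : D2 (a, a) = ContinuousLinearMap.id ℝ E := by
    have hida : (fun y => F (a, y)) =ᶠ[𝓝 a] (id : E → E) := by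
      filter_upwards [htargetopen.mem_nhds hatarget] with y hy
      simp only [hFdef, id_eq]
      rw [hsa, one_mul, ψ.right_inv hy]
    have h1 : HasFDerivAt (fun y => F (a, y)) (D2 (a, a)) a := hpart (a, a) hmemΩ₀
    have h2 : HasFDerivAt (fun y => F (a, y)) (ContinuousLinearMap.id ℝ E) a :=
      (hasFDerivAt_id a).congr_of_eventuallyEq hida
    exact h1.unique h2
  have hqc : ContinuousOn (fun p => ‖D2 p - ContinuousLinearMap.id ℝ E‖) Ω₀ :=
    (hD2c.sub continuousOn_const).norm
  have hopen2 : IsOpen (Ω₀ ∩ (fun p => ‖D2 p - ContinuousLinearMap.id ℝ E‖) ⁻¹'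
      Set.Iio (1 / 2 : ℝ)) := hqc.isOpen_inter_preimage hΩ₀o isOpen_Iio
  have hmem2 : ((a, a) : E × E) ∈ Ω₀ ∩ (fun p => ‖D2 p - ContinuousLinearMap.id ℝ E‖) ⁻¹'
      Set.Iio (1 / 2 : ℝ) := by
    refine ⟨hmemΩ₀, ?_⟩
    simp [hD2aa]
  obtain ⟨r₁, hr₁, hball1⟩ := Metric.isOpen_iff.mp hopen2 _ hmem2
  obtain ⟨r₂, hr₂, hball2⟩ := Metric.isOpen_iff.mp htargetopen a hatarget
  set r : ℝ := min r₁ r₂ with hrdef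
  have hr : 0 < r := lt_min hr₁ hr₂
  have hballΩ : ∀ x ∈ ball a r, ∀ y ∈ ball a r,
      ((x, y) : E × E) ∈ Ω₀ ∧ ‖D2 (x, y) - ContinuousLinearMap.id ℝ E‖ < 1 / 2 := by
    intro x hx y hy
    have hx1 : x ∈ ball a r₁ := ball_subset_ball (min_le_left _ _) hx
    have hy1 : y ∈ ball a r₁ := ball_subset_ball (min_le_left _ _) hy
    have : ((x, y) : E × E) ∈ ball ((a, a) : E × E) r₁ := by
      rw [← ball_prod_same]
      exact ⟨hx1, hy1⟩
    exact hball1 this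
  have hballtarget : ball a r ⊆ ψ.target :=
    fun x hx => hball2 (ball_subset_ball (min_le_right _ _) hx)
  have hest : ∀ x ∈ ball a r, ∀ y ∈ ball a r,
      ‖F (x, y) - y - (x - a)‖ ≤ 1 / 2 * ‖y - a‖ := by
    intro x hx y hy
    have hder : ∀ v ∈ ball a r, HasFDerivWithinAt (fun w => F (x, w) - w)
        (D2 (x, v) - ContinuousLinearMap.id ℝ E) (ball a r) v := by
      intro v hv
      have h1 : HasFDerivAt (fun w => F (x, w)) (D2 (x, v)) v := hpart (x, v) (hballΩ x hx v hv).1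
      exact (h1.sub (hasFDerivAt_id v)).hasFDerivWithinAt
    have hbound : ∀ v ∈ ball a r, ‖D2 (x, v) - ContinuousLinearMap.id ℝ E‖ ≤ 1 / 2 :=
      fun v hv => le_of_lt (hballΩ x hx v hv).2
    have hFxa : F (x, a) = x := by
      simp only [hFdef]
      rw [hsa, mul_one, ψ.right_inv (hballtarget hx)]
    have hmv := Convex.norm_image_sub_le_of_norm_hasFDerivWithin_le
      hder hbound (convex_ball a r) (mem_ball_self hr) hy
    have : F (x, y) - y - (x - a) = (F (x, y) - y) - (F (x, a) - a) := by
      rw [hFxa]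
    rw [this]
    exact hmv
  refine ⟨ψ.source ∩ ψ ⁻¹' ball a r, ?_, ?_⟩
  · have hopen3 : IsOpen (ψ.source ∩ ψ ⁻¹' ball a r) := by
      have hc : ContinuousOn ψ ψ.source := continuousOn_extChartAt (1 : G)
      have ho : IsOpen ψ.source := isOpen_extChartAt_source (1 : G)
      exact hc.isOpen_inter_preimage ho isOpen_ball
    refine hopen3.mem_nhds ⟨h1source, ?_⟩
    show ψ 1 ∈ ball a r
    rw [← hadef]
    exact mem_ball_self hr
  · intro H hH
    rw [eq_bot_iff]
    intro h hh
    simp only [Subgroup.mem_bot]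
    by_contra hne
    have hmemU : ∀ m : ℕ, h ^ m ∈ ψ.source ∧ ψ (h ^ m) ∈ ball a r := by
      intro m
      have := hH (pow_mem hh m)
      exact ⟨this.1, this.2⟩
    have hhU : h ∈ ψ.source ∧ ψ h ∈ ball a r := by
      have := hH hh; exact ⟨this.1, this.2⟩
    set u : E := ψ h - a with hudef
    have hu0 : u ≠ 0 := by
      intro h0
      apply hne
      have hψh : ψ h = a := by
        have := sub_eq_zero.mp h0
        exact this
      calc h = ψ.symm (ψ h) := (ψ.left_inv hhU.1).symm
        _ = ψ.symm a := by rw [hψh]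
        _ = 1 := hsa
    have hgrow : ∀ m : ℕ, ‖ψ (h ^ m) - a - (m : ℝ) • u‖ ≤ (m : ℝ) * (‖u‖ / 2) := by
      intro m
      induction m with
      | zero => simp [hadef]
      | succ m ih =>
        have hx := (hmemU m).2
        have hy := hhU.2
        have hFeq : F (ψ (h ^ m), ψ h) = ψ (h ^ (m + 1)) := by
          simp only [hFdef]
          rw [ψ.left_inv (hmemU m).1, ψ.left_inv hhU.1, ← pow_succ]
        have hest' := hest _ hx _ hy
        rw [hFeq] at hest'
        have hdecomp : ψ (h ^ (m + 1)) - a - ((m + 1 : ℕ) : ℝ) • u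
            = (ψ (h ^ (m + 1)) - ψ h - (ψ (h ^ m) - a)) + (ψ (h ^ m) - a - (m : ℝ) • u) := by
          push_cast
          rw [add_smul, one_smul]
          rw [hudef]
          abel
        rw [hdecomp]
        refine (norm_add_le _ _).trans ?_
        have h1 : ‖ψ (h ^ (m + 1)) - ψ h - (ψ (h ^ m) - a)‖ ≤ 1 / 2 * ‖ψ h - a‖ := hest'
        have h2 : ‖ψ h - a‖ = ‖u‖ := by rw [hudef]
        push_cast
        calc ‖ψ (h ^ (m + 1)) - ψ h - (ψ (h ^ m) - a)‖ + ‖ψ (h ^ m) - a - (m : ℝ) • u‖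
            ≤ 1 / 2 * ‖u‖ + (m : ℝ) * (‖u‖ / 2) := by
              refine add_le_add ?_ ih
              rw [← h2]; exact h1
          _ = ((m : ℝ) + 1) * (‖u‖ / 2) := by ring
    have hlt : ∀ m : ℕ, (m : ℝ) * (‖u‖ / 2) < r := by
      intro m
      have h3 : ‖(m : ℝ) • u‖ ≤ ‖ψ (h ^ m) - a‖ + ‖ψ (h ^ m) - a - (m : ℝ) • u‖ := by
        have heq3 : (m : ℝ) • u = (ψ (h ^ m) - a) - (ψ (h ^ m) - a - (m : ℝ) • u) := by abel
        conv_lhs => rw [heq3]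
        exact norm_sub_le _ _
      have h4 : ‖(m : ℝ) • u‖ = (m : ℝ) * ‖u‖ := by
        rw [norm_smul, Real.norm_natCast]
      have h5 : ‖ψ (h ^ m) - a‖ < r := by
        have := (hmemU m).2
        rwa [mem_ball, dist_eq_norm] at this
      have h6 := hgrow m
      rw [h4] at h3
      linarith
    have hupos : 0 < ‖u‖ / 2 := by
      have := norm_pos_iff.mpr hu0
      linarith
    obtain ⟨m, hm⟩ := exists_nat_gt (r / (‖u‖ / 2))
    have h7 : r < (m : ℝ) * (‖u‖ / 2) := by
      rw [div_lt_iff₀ hupos] at hm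
      linarith
    exact absurd (hlt m) (not_lt.mpr (le_of_lt h7))

end NSS

/-- Any compact subgroup of a connected nilpotent Lie group is central. -/
theorem stmt1 {E : Type*} [NormedAddCommGroup E] [NormedSpace ℝ E] [FiniteDimensional ℝ E]
    {G : Type*} [TopologicalSpace G] [ChartedSpace E G] [Group G]
    [LieGroup (modelWithCornersSelf ℝ E) (⊤ : ℕ∞) G] [ConnectedSpace G] [Group.IsNilpotent G]
    (K : Subgroup G) (hK : IsCompact (K : Set G)) :
    K ≤ Subgroup.center G := by
  haveI : IsTopologicalGroup G := topologicalGroup_of_lieGroup (modelWithCornersSelf ℝ E) (⊤ : ℕ∞)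
  obtain ⟨U₀, hU₀, hNSS⟩ := lieGroup_no_small_subgroups (E := E) (G := G)
  exact central_of_nss hU₀ hNSS K hK
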